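/- Compatibility of the generators with the bigradation. For all multi-indices γ, γ′, β and every 𝐧′ ∈ ℕ²: if the z^β-coefficient of (z^{γ′}·D^(𝐧′))(z^γ) is nonzero, then [β] = [γ] + [γ′] + 1 and Σ_{𝐦≠0} |𝐦|·β(𝐦) = Σ_{𝐦≠0} |𝐦|·γ(𝐦) + Σ_{𝐦≠0} |𝐦|·γ′(𝐦) − |𝐧′|. -/

import Mathlib

open MvPolynomial

abbrev N2 : Type := {p : ℕ × ℕ // p ≠ (0, 0)}
abbrev Idx : Type := ℕ ⊕ N2
abbrev MIdx : Type := Idx →₀ ℕ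
abbrev PS : Type := MvPowerSeries Idx ℝ

noncomputable section

/-- the weight `|𝐧| = w₁ n₁ + w₂ n₂` of `𝐧 ∈ ℕ²`. -/
def wt (w₁ w₂ : ℝ) (n : ℕ × ℕ) : ℝ := w₁ * n.1 + w₂ * n.2

/-- `[γ] = Σ_k k γ(k) − Σ_{𝐧≠0} γ(𝐧)`. -/
def brk (γ : MIdx) : ℤ :=
  γ.sum fun i n =>
    match i with
    | Sum.inl k => (k : ℤ) * n
    | Sum.inr _ => -(n : ℤ)

/-- `Σ_{𝐦≠0} |𝐦| γ(𝐦)`. -/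
def wsum (w₁ w₂ : ℝ) (γ : MIdx) : ℝ :=
  γ.sum fun i n =>
    match i with
    | Sum.inl _ => 0
    | Sum.inr m => wt w₁ w₂ m.1 * n

/-- the homogeneity `|γ| = α([γ]+1) + Σ_{𝐧≠0}|𝐧|γ(𝐧)`. -/
def homdeg (α w₁ w₂ : ℝ) (γ : MIdx) : ℝ := α * ((brk γ : ℝ) + 1) + wsum w₁ w₂ γ

/-! ### operators on monomials (polynomial level) -/

/-- `D^(0) z^γ = Σ_k (k+1) γ(k) z^{γ - e_k + e_{k+1}}`. -/
def D0mono (γ : MIdx) : MvPolynomial Idx ℝ :=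
  γ.sum fun i n =>
    match i with
    | Sum.inl k =>
        (((k + 1) * n : ℕ) : ℝ) •
          monomial (γ - Finsupp.single (Sum.inl k) 1 + Finsupp.single (Sum.inl (k + 1)) 1) 1
    | Sum.inr _ => 0

/-- `D^(𝐧) z^γ = ∂_{z_𝐧} z^γ` for `𝐧 ≠ 0`. -/
def DNmono (m : N2) (γ : MIdx) : MvPolynomial Idx ℝ :=
  ((γ (Sum.inr m) : ℕ) : ℝ) • monomial (γ - Finsupp.single (Sum.inr m) 1) 1

/-- `D^(𝐧) z^γ` for arbitrary `𝐧 ∈ ℕ²`. -/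
def Dmono (n : ℕ × ℕ) (γ : MIdx) : MvPolynomial Idx ℝ :=
  if h : n = (0, 0) then D0mono γ else DNmono ⟨n, h⟩ γ

lemma add10_ne (n : ℕ × ℕ) : n + (1, 0) ≠ (0, 0) := by
  intro h
  exact Nat.succ_ne_zero n.1 (congrArg Prod.fst h)

lemma add01_ne (n : ℕ × ℕ) : n + (0, 1) ≠ (0, 0) := by
  intro h
  exact Nat.succ_ne_zero n.2 (congrArg Prod.snd h)

def v10 : N2 := ⟨(1, 0), by decide⟩
def v01 : N2 := ⟨(0, 1), by decide⟩

/-- `∂₁ z^γ = z_{(1,0)} D^(0) z^γ + Σ_{𝐧≠0} (n₁+1) z_{𝐧+(1,0)} ∂_{z_𝐧} z^γ`. -/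
def d1mono (γ : MIdx) : MvPolynomial Idx ℝ :=
  X (Sum.inr v10) * D0mono γ +
    γ.sum fun i n =>
      match i with
      | Sum.inl _ => 0
      | Sum.inr m =>
          (((m.1.1 + 1) * n : ℕ) : ℝ) •
            monomial
              (γ - Finsupp.single (Sum.inr m) 1 +
                Finsupp.single (Sum.inr ⟨m.1 + (1, 0), add10_ne m.1⟩) 1) 1

/-- `∂₂ z^γ`. -/
def d2mono (γ : MIdx) : MvPolynomial Idx ℝ :=
  X (Sum.inr v01) * D0mono γ +
    γ.sum fun i n =>
      match i with
      | Sum.inl _ => 0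
      | Sum.inr m =>
          (((m.1.2 + 1) * n : ℕ) : ℝ) •
            monomial
              (γ - Finsupp.single (Sum.inr m) 1 +
                Finsupp.single (Sum.inr ⟨m.1 + (0, 1), add01_ne m.1⟩) 1) 1

/-! ### operators on power series (coefficientwise) -/

/-- coefficient of `D^(0) f` at `β`. -/
def D0coeff (f : PS) (β : MIdx) : ℝ :=
  ∑ i ∈ β.support,
    match i with
    | Sum.inl (k + 1) =>
        (((k + 1) * (β (Sum.inl k) + 1) : ℕ) : ℝ) *
          MvPowerSeries.coeff
            (β + Finsupp.single (Sum.inl k) 1 - Finsupp.single (Sum.inl (k + 1)) 1) f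
    | _ => 0

/-- `D^(0)` on power series. -/
def D0series (f : PS) : PS := D0coeff f

/-- `D^(𝐧) = ∂_{z_𝐧}` on power series, `𝐧 ≠ 0`. -/
def DNseries (m : N2) (f : PS) : PS :=
  fun β => ((β (Sum.inr m) + 1 : ℕ) : ℝ) *
    MvPowerSeries.coeff (β + Finsupp.single (Sum.inr m) 1) f

/-- `D^(𝐧)` on power series for arbitrary `𝐧 ∈ ℕ²`. -/
def Dseries (n : ℕ × ℕ) (f : PS) : PS :=
  if h : n = (0, 0) then D0series f else DNseries ⟨n, h⟩ f

/-- coefficient of `∂₁ f` at `β`. -/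
def d1coeff (f : PS) (β : MIdx) : ℝ :=
  (if 1 ≤ β (Sum.inr v10) then D0coeff f (β - Finsupp.single (Sum.inr v10) 1) else 0) +
    ∑ i ∈ β.support,
      match i with
      | Sum.inl _ => 0
      | Sum.inr p =>
          if hp : ((p.1.1 - 1, p.1.2) : ℕ × ℕ) ≠ (0, 0) ∧ 1 ≤ p.1.1 then
            (p.1.1 : ℝ) *
              ((((β - Finsupp.single (Sum.inr p) 1 : MIdx) (Sum.inr ⟨(p.1.1 - 1, p.1.2), hp.1⟩) : ℕ) + 1 : ℕ) : ℝ) *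
              MvPowerSeries.coeff
                (β - Finsupp.single (Sum.inr p) 1 +
                  Finsupp.single (Sum.inr ⟨(p.1.1 - 1, p.1.2), hp.1⟩) 1) f
          else 0

/-- `∂₁` on power series. -/
def d1series (f : PS) : PS := d1coeff f

/-- coefficient of `∂₂ f` at `β`. -/
def d2coeff (f : PS) (β : MIdx) : ℝ :=
  (if 1 ≤ β (Sum.inr v01) then D0coeff f (β - Finsupp.single (Sum.inr v01) 1) else 0) +
    ∑ i ∈ β.support,
      match i with
      | Sum.inl _ => 0
      | Sum.inr p =>
          if hp : ((p.1.1, p.1.2 - 1) : ℕ × ℕ) ≠ (0, 0) ∧ 1 ≤ p.1.2 then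
            (p.1.2 : ℝ) *
              ((((β - Finsupp.single (Sum.inr p) 1 : MIdx) (Sum.inr ⟨(p.1.1, p.1.2 - 1), hp.1⟩) : ℕ) + 1 : ℕ) : ℝ) *
              MvPowerSeries.coeff
                (β - Finsupp.single (Sum.inr p) 1 +
                  Finsupp.single (Sum.inr ⟨(p.1.1, p.1.2 - 1), hp.1⟩) 1) f
          else 0

/-- `∂₂` on power series. -/
def d2series (f : PS) : PS := d2coeff f

/-- the operator `z^γ·D^(𝐧)` on power series. -/
def opOf (γ : MIdx) (n : ℕ × ℕ) (f : PS) : PS :=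
  MvPowerSeries.monomial (R := ℝ) γ 1 * Dseries n f

/-- the dual model space `T̃*`. -/
def Ttilde : Set PS := {f | ∀ γ : MIdx, MvPowerSeries.coeff γ f ≠ 0 → 0 ≤ brk γ}

/-- the dual model space `T*`. -/
def Tstar : Set PS :=
  {f | ∀ γ : MIdx, MvPowerSeries.coeff γ f ≠ 0 →
      0 ≤ brk γ ∨ ∃ m : N2, γ = Finsupp.single (Sum.inr m) 1}

/-! ### topology and the realization property -/

instance : TopologicalSpace PS := inferInstanceAs (TopologicalSpace ((Idx →₀ ℕ) → ℝ))

/-- `Γ` realizes the family `(π^(𝐧))_{𝐧∈ℕ²}`. -/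
def Realizes (Γ : PS →ₐ[ℝ] PS) (π : ℕ × ℕ → PS) : Prop :=
  Continuous Γ ∧
    (∀ m : N2, Γ (MvPowerSeries.X (Sum.inr m)) = MvPowerSeries.X (Sum.inr m) + π m.1) ∧
    (∀ k : ℕ, HasSum
      (fun l : ℕ => ((k + l).choose k : ℝ) • (π (0, 0) ^ l * MvPowerSeries.X (Sum.inl (k + l))))
      (Γ (MvPowerSeries.X (Sum.inl k))))

end


section AuxStmt6

lemma brk_add (a b : MIdx) : brk (a + b) = brk a + brk b := by
  unfold brk
  rw [Finsupp.sum_add_index']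
  · intro i; cases i <;> simp
  · intro i m n; cases i <;> push_cast <;> ring

lemma wsum_add (w₁ w₂ : ℝ) (a b : MIdx) :
    wsum w₁ w₂ (a + b) = wsum w₁ w₂ a + wsum w₁ w₂ b := by
  unfold wsum
  rw [Finsupp.sum_add_index']
  · intro i; cases i <;> simp
  · intro i m n; cases i <;> push_cast <;> ring

lemma brk_single_inl (k n : ℕ) : brk (Finsupp.single (Sum.inl k : Idx) n) = (k : ℤ) * n := by
  unfold brk
  rw [Finsupp.sum_single_index] <;> simp

lemma brk_single_inr (m : N2) (n : ℕ) :
    brk (Finsupp.single (Sum.inr m : Idx) n) = -(n : ℤ) := by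
  unfold brk
  rw [Finsupp.sum_single_index] <;> simp

lemma wsum_single_inl (w₁ w₂ : ℝ) (k n : ℕ) :
    wsum w₁ w₂ (Finsupp.single (Sum.inl k : Idx) n) = 0 := by
  unfold wsum
  rw [Finsupp.sum_single_index] <;> simp

lemma wsum_single_inr (w₁ w₂ : ℝ) (m : N2) (n : ℕ) :
    wsum w₁ w₂ (Finsupp.single (Sum.inr m : Idx) n) = wt w₁ w₂ m.1 * n := by
  unfold wsum
  rw [Finsupp.sum_single_index] <;> simp

lemma sub_add_single_self (γ : MIdx) (i : Idx) (h : 1 ≤ γ i) :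
    γ - Finsupp.single i 1 + Finsupp.single i 1 = γ := by
  ext j
  by_cases hj : j = i
  · subst hj
    simp [Nat.sub_add_cancel h]
  · simp [Finsupp.single_apply, Ne.symm hj]

end AuxStmt6

/-- **Compatibility of the generators with the bigradation** (formula (fs04)). -/
theorem stmt6 (w₁ w₂ : ℝ) (hw₁ : 0 < w₁) (hw₂ : 0 < w₂) (γ γ' β : MIdx) (n' : ℕ × ℕ)
    (h : MvPolynomial.coeff β (MvPolynomial.monomial γ' 1 * Dmono n' γ) ≠ 0) :
    brk β = brk γ + brk γ' + 1 ∧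
      wsum w₁ w₂ β = wsum w₁ w₂ γ + wsum w₁ w₂ γ' - wt w₁ w₂ n' := by
  classical
  by_cases hn : n' = (0, 0)
  · subst hn
    rw [Dmono, dif_pos rfl, D0mono, Finsupp.mul_sum] at h
    rw [show (MvPolynomial.coeff β : MvPolynomial Idx ℝ → ℝ) = MvPolynomial.lcoeff ℝ β from rfl,
      map_finsuppSum] at h
    obtain ⟨i, hi, hterm⟩ := Finset.exists_ne_zero_of_sum_ne_zero h
    cases i with
    | inr m => simp at hterm
    | inl k =>
      simp only [MvPolynomial.lcoeff_apply, mul_smul_comm, MvPolynomial.monomial_mul,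
        mul_one, MvPolynomial.coeff_smul, MvPolynomial.coeff_monomial] at hterm
      split_ifs at hterm with hβ
      · have hγk : 1 ≤ γ (Sum.inl k) := by
          by_contra hc
          push_neg at hc
          interval_cases hγ : γ (Sum.inl k) <;> simp_all
        subst hβ
        have hrec := sub_add_single_self γ (Sum.inl k) hγk
        constructor
        · have h1 : brk γ = brk (γ - Finsupp.single (Sum.inl k) 1) + (k : ℤ) := by
            conv_lhs => rw [← hrec]
            rw [brk_add, brk_single_inl]; ring
          rw [brk_add, brk_add, brk_single_inl, h1]
          push_cast; ring
        · have h1 : wsum w₁ w₂ γ = wsum w₁ w₂ (γ - Finsupp.single (Sum.inl k) 1) := by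
            conv_lhs => rw [← hrec]
            rw [wsum_add, wsum_single_inl, add_zero]
          rw [wsum_add, wsum_add, wsum_single_inl, h1, wt]
          push_cast; ring
      · simp at hterm
  · rw [Dmono, dif_neg hn, DNmono, mul_smul_comm, MvPolynomial.monomial_mul, mul_one,
      MvPolynomial.coeff_smul, MvPolynomial.coeff_monomial] at h
    split_ifs at h with hβ
    · have hγm : 1 ≤ γ (Sum.inr ⟨n', hn⟩) := by
        by_contra hc
        push_neg at hc
        interval_cases hγ : γ (Sum.inr (⟨n', hn⟩ : N2)) <;> simp_all
      subst hβ
      have hrec := sub_add_single_self γ (Sum.inr ⟨n', hn⟩) hγm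
      constructor
      · have h1 : brk γ = brk (γ - Finsupp.single (Sum.inr ⟨n', hn⟩ : Idx) 1) - 1 := by
          conv_lhs => rw [← hrec]
          rw [brk_add, brk_single_inr]; push_cast; ring
        rw [brk_add, h1]; ring
      · have h1 : wsum w₁ w₂ γ =
            wsum w₁ w₂ (γ - Finsupp.single (Sum.inr ⟨n', hn⟩ : Idx) 1) + wt w₁ w₂ n' := by
          conv_lhs => rw [← hrec]
          rw [wsum_add, wsum_single_inr]; push_cast; ring
        rw [wsum_add, h1]; ring
    · simp at h
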